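/- Let s ∈ S, w ∈ W with ℓ(sw) > ℓ(w), and n ∈ ℕ. Then Σ_n(sw) = {α_s} ⊔ (Σ_n ∩ s(Σ_n(w))), where Σ_n(v) = N(v) ∩ Σ_n is the n-small inversion set of v. -/

import Mathlib

open scoped Classical

noncomputable section

namespace CoxGar

variable {I : Type*} {W : Type*} [Group W] {M : CoxeterMatrix I}
variable {V : Type*} [AddCommGroup V] [Module ℝ V]

/-- The conic (nonnegative) hull of a set of vectors. -/
def posSpan (A : Set V) : Set V :=
  {v | ∃ (s : Finset V) (c : V → ℝ), ↑s ⊆ A ∧ (∀ x ∈ s, 0 ≤ c x) ∧ v = ∑ x ∈ s, c x • x}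

/-- `l` is a reduced word. -/
def IsRed (cs : CoxeterSystem M W) (l : List I) : Prop :=
  cs.length (cs.wordProd l) = l.length

/-- Right weak order: `u` is a prefix of `v`, i.e. some reduced word for `u` is a prefix of
some reduced word for `v`. -/
def leR (cs : CoxeterSystem M W) (u v : W) : Prop :=
  ∃ l₁ l₂ : List I, IsRed cs (l₁ ++ l₂) ∧ cs.wordProd (l₁ ++ l₂) = v ∧ cs.wordProd l₁ = u

/-- `u` is a suffix of `v`: some reduced word for `u` is a suffix of some reduced word for `v`. -/
def IsSuffixOf (cs : CoxeterSystem M W) (u v : W) : Prop :=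
  ∃ l₁ l₂ : List I, IsRed cs (l₁ ++ l₂) ∧ cs.wordProd (l₁ ++ l₂) = v ∧ cs.wordProd l₂ = u

/-- `j` is the join (least upper bound) of `X` in right weak order. -/
def IsJoin (cs : CoxeterSystem M W) (X : Set W) (j : W) : Prop :=
  (∀ x ∈ X, leR cs x j) ∧ ∀ g, (∀ x ∈ X, leR cs x g) → leR cs j g

/-- A Garside shadow in the Coxeter system `(W,S)`: a subset of `W` containing all simple
reflections, closed under existing joins in right weak order and under taking suffixes. -/
structure IsGarsideShadow (cs : CoxeterSystem M W) (A : Set W) : Prop where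
  simple_mem : ∀ i : I, cs.simple i ∈ A
  join_mem : ∀ X ⊆ A, ∀ j : W, IsJoin cs X j → j ∈ A
  suffix_mem : ∀ w ∈ A, ∀ u : W, IsSuffixOf cs u w → u ∈ A

/-- Word length with respect to an arbitrary generating set of a group. -/
def genLen (Sgen : Set W) (w : W) : ℕ :=
  sInf {n | ∃ l : List W, l.length = n ∧ (∀ x ∈ l, x ∈ Sgen) ∧ l.prod = w}

/-- A geometric representation of the Coxeter system `cs` on the quadratic space `(V,B)`:
a faithful representation sending the simple reflections to the `B`-reflections in a
simple system `α` (positively independent unit roots with the prescribed pairings). -/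
structure GeomRep (cs : CoxeterSystem M W) (V : Type*) [AddCommGroup V] [Module ℝ V] where
  B : V →ₗ[ℝ] V →ₗ[ℝ] ℝ
  symm : ∀ u v : V, B u v = B v u
  α : I → V
  norm_one : ∀ i, B (α i) (α i) = 1
  pairing_finite : ∀ i j, M i j ≠ 0 → B (α i) (α j) = - Real.cos (Real.pi / (M i j : ℝ))
  pairing_infinite : ∀ i j, M i j = 0 → B (α i) (α j) ≤ -1
  posIndep : ∀ f : I →₀ ℝ, (∀ i, 0 ≤ f i) → (f.sum fun i c => c • α i) = 0 → f = 0
  ρ : Representation ℝ W V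
  faithful : Function.Injective ρ
  ρ_simple : ∀ (i : I) (v : V), ρ (cs.simple i) v = v - (2 * B (α i) v) • α i
  ρ_isom : ∀ (w : W) (u v : V), B (ρ w u) (ρ w v) = B u v

namespace GeomRep

variable {cs : CoxeterSystem M W} (gr : GeomRep cs V)

/-- The root system `Φ`: the orbit of the simple roots. -/
def roots : Set V := {v | ∃ (w : W) (i : I), v = gr.ρ w (gr.α i)}

/-- The positive roots `Φ⁺`. -/
def posRoots : Set V := gr.roots ∩ posSpan (Set.range gr.α)

/-- The left inversion set `N(w) = Φ⁺ ∩ w(Φ⁻)`. -/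
def invSet (w : W) : Set V := {v | v ∈ gr.posRoots ∧ gr.ρ w⁻¹ v ∈ -gr.posRoots}

/-- The reflection `s_β ∈ W` associated to a root `β` (the element of `W` acting on `V` as the
`B`-reflection along `β`). -/
def rfl' (b : V) : W :=
  Classical.epsilon fun t => ∀ v : V, gr.ρ t v = v - (2 * gr.B b v) • b

/-- Dominance order: `a ⪯ b` iff every inversion set containing `b` contains `a`. -/
def dominates (a b : V) : Prop := ∀ w : W, b ∈ gr.invSet w → a ∈ gr.invSet w

/-- The set of positive roots strictly dominated by `b`. -/
def domSet (b : V) : Set V := {a | a ∈ gr.posRoots ∧ gr.dominates a b ∧ a ≠ b}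

/-- The dominance depth (`∞`-depth) of a root. -/
def dpInf (b : V) : ℕ := (gr.domSet b).ncard

/-- The set `Σ_n` of `n`-small roots. -/
def smallRoots (n : ℕ) : Set V := {b | b ∈ gr.posRoots ∧ gr.dpInf b ≤ n}

/-- `w` is `n`-low: its inversion set is the set of roots in the conic hull of its
`n`-small inversion set. -/
def IsLow (n : ℕ) (w : W) : Prop :=
  gr.invSet w = posSpan (gr.invSet w ∩ gr.smallRoots n) ∩ gr.roots

/-- The set `L_n(W)` of `n`-low elements. -/
def lowSet (n : ℕ) : Set W := {w | gr.IsLow n w}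

/-- The base `N¹(w)` of the inversion set: positive roots `β` with `ℓ(s_β w) = ℓ(w) - 1`. -/
def base (w : W) : Set V :=
  {b | b ∈ gr.posRoots ∧ cs.length (gr.rfl' b * w) + 1 = cs.length w}

/-- The roots of a reflection subgroup `W'`. -/
def rootsOf (W' : Subgroup W) : Set V := {b | b ∈ gr.roots ∧ gr.rfl' b ∈ W'}

/-- The canonical simple system of a reflection subgroup `W'`. -/
def canSimples (W' : Subgroup W) : Set V :=
  {a | a ∈ gr.posRoots ∧ gr.invSet (gr.rfl' a) ∩ gr.rootsOf W' = {a}}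

/-- `{a,b}` is the canonical simple pair of a maximal dihedral reflection subgroup:
both are positive roots and the positive roots in the plane they span are exactly the
roots in their conic hull. -/
def IsMaxDihedralPair (a b : V) : Prop :=
  a ∈ gr.posRoots ∧ b ∈ gr.posRoots ∧ a ≠ b ∧
    (Submodule.span ℝ {a, b} : Set V) ∩ gr.posRoots = posSpan {a, b} ∩ gr.roots

/-- A set of positive roots is bipodal if, whenever it contains a positive non-simple root of a
maximal dihedral reflection subgroup, it contains both canonical simple roots of that subgroup. -/
def Bipodal (A : Set V) : Prop :=
  ∀ a b : V, gr.IsMaxDihedralPair a b →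
    (∃ c ∈ A, c ∈ posSpan {a, b} ∩ gr.roots ∧ c ≠ a ∧ c ≠ b) → a ∈ A ∧ b ∈ A

/-- `f_s(β)`: the root completing `α_s` to the canonical simple pair of the maximal dihedral
reflection subgroup containing `s` and `s_β`. -/
def fRoot (i : I) (b : V) : V :=
  Classical.epsilon fun c => c ∈ gr.posRoots ∧
    (Submodule.span ℝ {gr.α i, b} : Set V) ∩ gr.posRoots = posSpan {gr.α i, c} ∩ gr.roots

/-- The `X`-length of a positive root. -/
def dXpos (X : Set ℝ) (b : V) : ℕ :=
  {a | a ∈ gr.invSet (gr.rfl' b) ∧ gr.B a b ∈ X}.ncard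

/-- The `X`-length function `d_X` on the root system, with `d_X(-β) = -d_X(β)`. -/
def dX (X : Set ℝ) (b : V) : ℤ :=
  if b ∈ gr.posRoots then (gr.dXpos X b : ℤ) else -(gr.dXpos X (-b) : ℤ)

/-- Normalization of a vector to square length one. -/
def nzd (v : V) : V := (Real.sqrt (gr.B v v))⁻¹ • v

/-- A root `a` spans an extreme ray of the cone `C`. -/
def IsExtremeRayRep (C : Set V) (a : V) : Prop :=
  a ∈ C ∧ a ≠ 0 ∧ ∀ u ∈ C, ∀ v ∈ C, a ∈ posSpan {u, v} →
    (∃ c : ℝ, 0 < c ∧ u = c • a) ∨ (∃ c : ℝ, 0 < c ∧ v = c • a)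

end GeomRep

variable {cs : CoxeterSystem M W}


/-! ### Auxiliary lemmas -/

theorem posSpan_zero_mem (A : Set V) : (0 : V) ∈ posSpan A :=
  ⟨∅, fun _ => 0, by simp, by simp, by simp⟩

theorem mem_posSpan_self {A : Set V} {x : V} (hx : x ∈ A) : x ∈ posSpan A :=
  ⟨{x}, fun _ => 1, by simpa, by simp, by simp⟩

private theorem sum_union_ite (s t : Finset V) (c : V → ℝ) :
    ∑ x ∈ s ∪ t, (if x ∈ s then c x else 0) • x = ∑ x ∈ s, c x • x := by
  rw [← Finset.sum_subset Finset.subset_union_left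
    (f := fun x => (if x ∈ s then c x else 0) • x)
    (fun x _ hx => by rw [if_neg hx, zero_smul])]
  exact Finset.sum_congr rfl fun x hx => by rw [if_pos hx]

theorem posSpan_add {A : Set V} {u v : V} (hu : u ∈ posSpan A) (hv : v ∈ posSpan A) :
    u + v ∈ posSpan A := by
  obtain ⟨s, c, hs, hc, rfl⟩ := hu
  obtain ⟨t, d, ht, hd, rfl⟩ := hv
  refine ⟨s ∪ t, fun x => (if x ∈ s then c x else 0) + (if x ∈ t then d x else 0), ?_, ?_, ?_⟩
  · intro x hx
    rcases Finset.mem_union.mp hx with h | h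
    · exact hs h
    · exact ht h
  · intro x _
    have h1 : (0:ℝ) ≤ if x ∈ s then c x else 0 := by
      split_ifs with h
      · exact hc x h
      · exact le_refl 0
    have h2 : (0:ℝ) ≤ if x ∈ t then d x else 0 := by
      split_ifs with h
      · exact hd x h
      · exact le_refl 0
    exact add_nonneg h1 h2
  · rw [← sum_union_ite s t c, ← sum_union_ite t s d, Finset.union_comm t s,
      ← Finset.sum_add_distrib]
    exact Finset.sum_congr rfl fun x _ => by rw [add_smul]

theorem posSpan_smul {A : Set V} {u : V} {a : ℝ} (ha : 0 ≤ a) (hu : u ∈ posSpan A) :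
    a • u ∈ posSpan A := by
  obtain ⟨s, c, hs, hc, rfl⟩ := hu
  refine ⟨s, fun x => a * c x, hs, fun x hx => mul_nonneg ha (hc x hx), ?_⟩
  rw [Finset.smul_sum]
  exact Finset.sum_congr rfl fun x _ => by rw [smul_smul]

private theorem finsupp_sum_add (f g : I →₀ ℝ) (v : I → V) :
    ((f + g).sum fun i c => c • v i)
      = (f.sum fun i c => c • v i) + g.sum fun i c => c • v i :=
  Finsupp.sum_add_index' (h := fun i c => c • v i) (fun i => zero_smul ℝ _)
    (fun i b₁ b₂ => add_smul b₁ b₂ _)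

private theorem finsupp_sum_single (i : I) (r : ℝ) (v : I → V) :
    ((Finsupp.single i r).sum fun j c => c • v j) = r • v i :=
  Finsupp.sum_single_index (zero_smul ℝ _)

namespace GeomRep

variable {cs : CoxeterSystem M W} (gr : GeomRep cs V)

theorem exists_finsupp {u : V} (hu : u ∈ posSpan (Set.range gr.α)) :
    ∃ f : I →₀ ℝ, (∀ i, 0 ≤ f i) ∧ u = f.sum fun i c => c • gr.α i := by
  obtain ⟨s, c, hs, hc, rfl⟩ := hu
  induction s using Finset.induction_on with
  | empty => exact ⟨0, fun i => le_refl 0, by simp⟩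
  | @insert x s' hx ih =>
    obtain ⟨f', hf', hsum⟩ := ih (fun y hy => hs (by simp [hy]))
      (fun y hy => hc y (by simp [hy]))
    obtain ⟨i₀, hi₀⟩ := hs (Finset.mem_insert_self x s')
    have hcx : 0 ≤ c x := hc x (Finset.mem_insert_self x s')
    refine ⟨f' + Finsupp.single i₀ (c x), ?_, ?_⟩
    · intro i
      have h1 := hf' i
      have h2 : 0 ≤ Finsupp.single i₀ (c x) i := by
        rw [Finsupp.single_apply]
        split_ifs
        · exact hcx
        · exact le_refl 0
      simp only [Finsupp.add_apply]
      linarith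
    · rw [Finset.sum_insert hx, finsupp_sum_add, ← hsum, finsupp_sum_single, hi₀]
      exact add_comm _ _

theorem pos_neg_zero {u v : V} (hu : u ∈ posSpan (Set.range gr.α))
    (hv : v ∈ posSpan (Set.range gr.α)) (h : u + v = 0) : u = 0 := by
  obtain ⟨f, hf, rfl⟩ := gr.exists_finsupp hu
  obtain ⟨g, hg, rfl⟩ := gr.exists_finsupp hv
  have hsum : ((f + g).sum fun i c => c • gr.α i) = 0 := by
    rw [finsupp_sum_add]; exact h
  have hz := gr.posIndep (f + g) (fun i => by
    have := hf i; have := hg i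
    simp only [Finsupp.add_apply]; linarith) hsum
  have hfz : f = 0 := by
    ext i
    have h1 : f i + g i = 0 := by
      have := congrArg (fun φ => φ i) hz
      simpa using this
    have := hf i; have := hg i
    simp only [Finsupp.coe_zero, Pi.zero_apply]
    linarith
  rw [hfz, Finsupp.sum_zero_index]

theorem pairing_nonpos {i j : I} (h : i ≠ j) : gr.B (gr.α i) (gr.α j) ≤ 0 := by
  rcases eq_or_ne (M i j) 0 with hm | hm
  · linarith [gr.pairing_infinite i j hm]
  · rw [gr.pairing_finite i j hm]
    have h2 : 2 ≤ M i j := by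
      have := M.off_diagonal i j h
      omega
    have h2' : (2:ℝ) ≤ (M i j : ℝ) := by exact_mod_cast h2
    have hpos : 0 < (M i j : ℝ) := by linarith
    have hple : Real.pi / (M i j : ℝ) ≤ Real.pi / 2 :=
      div_le_div_of_nonneg_left (le_of_lt Real.pi_pos) (by norm_num) h2'
    have hge : 0 ≤ Real.pi / (M i j : ℝ) := by positivity
    have : 0 ≤ Real.cos (Real.pi / (M i j : ℝ)) := by
      apply Real.cos_nonneg_of_mem_Icc
      constructor
      · linarith [Real.pi_pos]
      · exact hple
    linarith

theorem sum_eq_smul_simple {u v : V} {i : I} {r : ℝ}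
    (hu : u ∈ posSpan (Set.range gr.α)) (hv : v ∈ posSpan (Set.range gr.α))
    (huv : u + v = r • gr.α i) : ∃ a : ℝ, 0 ≤ a ∧ u = a • gr.α i := by
  obtain ⟨f, hf, rfl⟩ := gr.exists_finsupp hu
  obtain ⟨g, hg, rfl⟩ := gr.exists_finsupp hv
  set h : I →₀ ℝ := f + g with hh
  have hnn : ∀ j, 0 ≤ h j := fun j => by
    have := hf j; have := hg j; simp only [hh, Finsupp.add_apply]; linarith
  have hsum : (h.sum fun j c => c • gr.α j) = r • gr.α i := by
    rw [hh, finsupp_sum_add]; exact huv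
  have hdec : Finsupp.single i (h i) + h.erase i = h := Finsupp.single_add_erase i h
  have herasesum : ((h.erase i).sum fun j c => c • gr.α j) = (r - h i) • gr.α i := by
    have h3 : ((Finsupp.single i (h i) + h.erase i).sum fun j c => c • gr.α j)
        = r • gr.α i := by rw [hdec]; exact hsum
    rw [finsupp_sum_add, finsupp_sum_single] at h3
    have h4 := sub_eq_of_eq_add' h3.symm
    rw [← h4, sub_smul]
  have hpair : gr.B (gr.α i) ((h.erase i).sum fun j c => c • gr.α j) ≤ 0 := by
    rw [Finsupp.sum, map_sum]
    apply Finset.sum_nonpos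
    intro j hj
    have hji : j ≠ i := by
      rw [Finsupp.support_erase] at hj
      exact Finset.ne_of_mem_erase hj
    rw [map_smul]
    have h1 : gr.B (gr.α i) (gr.α j) ≤ 0 := gr.pairing_nonpos (Ne.symm hji)
    have h2 : 0 ≤ (h.erase i) j := by
      rw [Finsupp.erase_ne hji]
      exact hnn j
    exact mul_nonpos_of_nonneg_of_nonpos h2 h1
  rw [herasesum, map_smul, smul_eq_mul, gr.norm_one, mul_one] at hpair
  have hri : r ≤ h i := by linarith
  have hzero : ((h.erase i + Finsupp.single i (h i - r)).sum fun j c => c • gr.α j) = 0 := by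
    rw [finsupp_sum_add, finsupp_sum_single, herasesum, ← add_smul]
    simp
  have hz := gr.posIndep _ (fun j => by
    rcases eq_or_ne j i with rfl | hne
    · simp only [Finsupp.add_apply, Finsupp.erase_same, Finsupp.single_eq_same]
      linarith
    · rw [Finsupp.add_apply, Finsupp.erase_ne hne, Finsupp.single_apply, if_neg
        (fun hc => hne hc.symm), add_zero]
      exact hnn j) hzero
  have hfj : ∀ j, j ≠ i → f j = 0 := by
    intro j hne
    have h1 : h.erase i j + Finsupp.single i (h i - r) j = 0 := by
      have := congrArg (fun φ => φ j) hz
      simpa using this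
    rw [Finsupp.erase_ne hne, Finsupp.single_apply, if_neg (fun hc => hne hc.symm),
      add_zero] at h1
    have := hf j; have := hg j
    simp only [hh, Finsupp.add_apply] at h1
    linarith
  have hfsingle : f = Finsupp.single i (f i) := by
    ext j
    rcases eq_or_ne j i with rfl | hne
    · simp
    · rw [hfj j hne, Finsupp.single_apply, if_neg (fun hc => hne hc.symm)]
  refine ⟨f i, hf i, ?_⟩
  conv_lhs => rw [hfsingle]
  rw [finsupp_sum_single]

end GeomRep
section AltWord

theorem alt_split (i j : I) (t : ℕ) : ∀ k : ℕ, t ≤ k → ∃ l : List I,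
    l.length = k - t ∧ CoxeterSystem.alternatingWord i j k = l ++ CoxeterSystem.alternatingWord i j t := by
  intro k
  induction k with
  | zero => intro ht; exact ⟨[], by simp, by simp [Nat.le_zero.mp ht]⟩
  | succ k ih =>
    intro ht
    rcases eq_or_lt_of_le ht with rfl | hlt
    · exact ⟨[], by simp, by simp⟩
    · obtain ⟨l, hl, he⟩ := ih (Nat.lt_succ_iff.mp hlt)
      refine ⟨(if Even k then j else i) :: l, ?_, ?_⟩
      · simp only [List.length_cons, hl]
        omega
      · rw [CoxeterSystem.alternatingWord_succ', he]
        rfl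

end AltWord

namespace GeomRep

variable {cs : CoxeterSystem M W} (gr : GeomRep cs V)

theorem rho_mul_apply (u v' : W) (x : V) : gr.ρ (u * v') x = gr.ρ u (gr.ρ v' x) := by
  rw [map_mul]; rfl

theorem rho_one_apply (x : V) : gr.ρ 1 x = x := by
  rw [map_one]; rfl

theorem rho_inv_apply (u : W) (x : V) : gr.ρ u⁻¹ (gr.ρ u x) = x := by
  rw [← rho_mul_apply, inv_mul_cancel, rho_one_apply]

theorem rho_injective (u : W) : Function.Injective (gr.ρ u) := by
  intro x y hxy
  have := congrArg (gr.ρ u⁻¹) hxy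
  rwa [rho_inv_apply, rho_inv_apply] at this

theorem simple_mem_roots (i : I) : gr.α i ∈ gr.roots :=
  ⟨1, i, (gr.rho_one_apply _).symm⟩

theorem roots_invariant {x : V} (hx : x ∈ gr.roots) (w : W) : gr.ρ w x ∈ gr.roots := by
  obtain ⟨u, l, rfl⟩ := hx
  exact ⟨w * u, l, (gr.rho_mul_apply w u _).symm⟩

theorem root_norm_one {x : V} (hx : x ∈ gr.roots) : gr.B x x = 1 := by
  obtain ⟨w, l, rfl⟩ := hx
  rw [gr.ρ_isom, gr.norm_one]

theorem root_ne_zero {x : V} (hx : x ∈ gr.roots) : x ≠ 0 := by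
  intro h
  have := gr.root_norm_one hx
  rw [h] at this
  simp at this

theorem simple_mem_posRoots (i : I) : gr.α i ∈ gr.posRoots :=
  ⟨gr.simple_mem_roots i, mem_posSpan_self ⟨i, rfl⟩⟩

theorem not_pos_and_neg {x : V} (hx : x ∈ gr.posRoots) (hx' : -x ∈ gr.posRoots) : False := by
  have h0 : x = 0 := gr.pos_neg_zero hx.2 hx'.2 (by abel)
  exact gr.root_ne_zero hx.1 h0

theorem rho_simple_self (i : I) : gr.ρ (cs.simple i) (gr.α i) = - gr.α i := by
  rw [gr.ρ_simple, gr.norm_one]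
  module

theorem rho_simple_sq (i : I) (x : V) :
    gr.ρ (cs.simple i) (gr.ρ (cs.simple i) x) = x := by
  rw [← rho_mul_apply, cs.simple_mul_simple_self, rho_one_apply]

theorem posRoot_eq_simple {x : V} {i : I} (hx : x ∈ gr.roots) {a : ℝ} (ha : 0 ≤ a)
    (hxa : x = a • gr.α i) : x = gr.α i := by
  have h1 : gr.B x x = 1 := gr.root_norm_one hx
  rw [hxa] at h1
  simp only [map_smul, LinearMap.smul_apply, smul_eq_mul, gr.norm_one] at h1
  have : a = 1 := by nlinarith
  rw [hxa, this, one_smul]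

/-! ### Rank two computations -/

theorem rho_alt_cons (c : I) (l : List I) (x : V) :
    gr.ρ (cs.wordProd (c :: l)) x = gr.ρ (cs.simple c) (gr.ρ (cs.wordProd l) x) := by
  rw [cs.wordProd_cons, rho_mul_apply]

theorem rankTwoInf {i j : I} (hc : gr.B (gr.α i) (gr.α j) ≤ -1) (k : ℕ) :
    ∃ a b : ℝ, 0 ≤ a ∧ 0 ≤ b ∧ (Even k → b ≤ a) ∧ (¬ Even k → a ≤ b) ∧
      gr.ρ (cs.wordProd (CoxeterSystem.alternatingWord i j k)) (gr.α i)
        = a • gr.α i + b • gr.α j := by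
  induction k with
  | zero =>
    refine ⟨1, 0, by norm_num, le_refl 0, fun _ => by norm_num, fun h => absurd Even.zero h, ?_⟩
    show gr.ρ (cs.wordProd []) (gr.α i) = _
    rw [cs.wordProd_nil, rho_one_apply]
    module
  | succ k ih =>
    obtain ⟨a, b, ha, hb, hab, hba, hx⟩ := ih
    rw [CoxeterSystem.alternatingWord_succ']
    by_cases hk : Even k
    · have hba' : b ≤ a := hab hk
      rw [if_pos hk, rho_alt_cons, hx, gr.ρ_simple]
      have hB : gr.B (gr.α j) (a • gr.α i + b • gr.α j) = a * gr.B (gr.α i) (gr.α j) + b := by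
        rw [map_add, map_smul, map_smul, smul_eq_mul, smul_eq_mul, gr.norm_one, mul_one,
          gr.symm (gr.α j) (gr.α i)]
      rw [hB]
      refine ⟨a, -b - 2*a*(gr.B (gr.α i) (gr.α j)), ha, by nlinarith, ?_, ?_, ?_⟩
      · intro h
        exact absurd (Nat.even_add_one.mp h) (not_not.mpr hk)
      · intro _
        nlinarith
      · module
    · have hab' : a ≤ b := hba hk
      rw [if_neg hk, rho_alt_cons, hx, gr.ρ_simple]
      have hB : gr.B (gr.α i) (a • gr.α i + b • gr.α j) = a + b * gr.B (gr.α i) (gr.α j) := by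
        rw [map_add, map_smul, map_smul, smul_eq_mul, smul_eq_mul, gr.norm_one, mul_one]
      rw [hB]
      refine ⟨-a - 2*b*(gr.B (gr.α i) (gr.α j)), b, by nlinarith, hb, ?_, ?_, ?_⟩
      · intro _
        nlinarith
      · intro h
        exact absurd (Nat.even_add_one.mpr hk) h
      · module

theorem rankTwoFinAux {i j : I} (hm : M i j ≠ 0) (k : ℕ) :
    Real.sin (Real.pi / (M i j : ℝ)) •
        gr.ρ (cs.wordProd (CoxeterSystem.alternatingWord i j k)) (gr.α i)
      = (if Even k then Real.sin (((k:ℝ)+1) * (Real.pi / (M i j : ℝ)))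
          else Real.sin ((k:ℝ) * (Real.pi / (M i j : ℝ)))) • gr.α i
        + (if Even k then Real.sin ((k:ℝ) * (Real.pi / (M i j : ℝ)))
          else Real.sin (((k:ℝ)+1) * (Real.pi / (M i j : ℝ)))) • gr.α j := by
  set θ := Real.pi / (M i j : ℝ) with hθ
  have hBij : gr.B (gr.α i) (gr.α j) = - Real.cos θ := gr.pairing_finite i j hm
  induction k with
  | zero =>
    show Real.sin θ • gr.ρ (cs.wordProd []) (gr.α i) = _
    rw [cs.wordProd_nil, rho_one_apply]
    norm_num
  | succ k ih =>
    rw [CoxeterSystem.alternatingWord_succ']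
    have hsinrec : Real.sin (((k:ℝ)+2) * θ)
        = 2 * Real.sin (((k:ℝ)+1) * θ) * Real.cos θ - Real.sin ((k:ℝ) * θ) := by
      rw [show ((k:ℝ)+2) * θ = ((k:ℝ)+1) * θ + θ by ring,
        show (k:ℝ) * θ = ((k:ℝ)+1) * θ - θ by ring, Real.sin_add, Real.sin_sub]
      ring
    by_cases hk : Even k
    · have hk1 : ¬ Even (k + 1) := by simp [Nat.even_add_one, hk]
      simp only [if_pos hk] at ih ⊢
      rw [rho_alt_cons, ← map_smul, ih, gr.ρ_simple]
      have hB : gr.B (gr.α j) (Real.sin (((k:ℝ)+1) * θ) • gr.α i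
            + Real.sin ((k:ℝ) * θ) • gr.α j)
          = Real.sin (((k:ℝ)+1) * θ) * (- Real.cos θ) + Real.sin ((k:ℝ) * θ) := by
        rw [map_add, map_smul, map_smul, smul_eq_mul, smul_eq_mul, gr.norm_one, mul_one,
          gr.symm (gr.α j) (gr.α i), hBij]
      rw [hB]
      simp only [if_neg hk1]
      push_cast
      rw [show ((k:ℝ) + 1 + 1) = (k:ℝ) + 2 by ring, hsinrec]
      module
    · have hk1 : Even (k + 1) := Nat.even_add_one.mpr hk
      simp only [if_neg hk] at ih ⊢
      rw [rho_alt_cons, ← map_smul, ih, gr.ρ_simple]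
      have hB : gr.B (gr.α i) (Real.sin ((k:ℝ) * θ) • gr.α i
            + Real.sin (((k:ℝ)+1) * θ) • gr.α j)
          = Real.sin ((k:ℝ) * θ) + Real.sin (((k:ℝ)+1) * θ) * (- Real.cos θ) := by
        rw [map_add, map_smul, map_smul, smul_eq_mul, smul_eq_mul, gr.norm_one, mul_one, hBij]
      rw [hB]
      simp only [if_pos hk1]
      push_cast
      rw [show ((k:ℝ) + 1 + 1) = (k:ℝ) + 2 by ring, hsinrec]
      module

theorem rankTwo {i j : I} (hij : i ≠ j) {k : ℕ} (hk : M i j = 0 ∨ k + 1 ≤ M i j) :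
    ∃ a b : ℝ, 0 ≤ a ∧ 0 ≤ b ∧
      gr.ρ (cs.wordProd (CoxeterSystem.alternatingWord i j k)) (gr.α i)
        = a • gr.α i + b • gr.α j := by
  rcases hk with hm | hk
  · obtain ⟨a, b, ha, hb, _, _, hx⟩ := gr.rankTwoInf (gr.pairing_infinite i j hm) k
    exact ⟨a, b, ha, hb, hx⟩
  · have hm : M i j ≠ 0 := by omega
    have h2 : 2 ≤ M i j := by
      have := M.off_diagonal i j hij
      omega
    set θ := Real.pi / (M i j : ℝ) with hθ
    have hmr : (2:ℝ) ≤ (M i j : ℝ) := by exact_mod_cast h2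
    have hθpos : 0 < θ := by
      rw [hθ]
      positivity
    have hθlt : θ < Real.pi := by
      rw [hθ, div_lt_iff₀ (by linarith)]
      nlinarith [Real.pi_pos]
    have hsin : 0 < Real.sin θ := Real.sin_pos_of_pos_of_lt_pi hθpos hθlt
    have hbound : ∀ x : ℝ, 0 ≤ x → x ≤ (M i j : ℝ) → 0 ≤ Real.sin (x * θ) := by
      intro x hx0 hxm
      apply Real.sin_nonneg_of_nonneg_of_le_pi
      · positivity
      · rw [hθ]
        calc x * (Real.pi / (M i j : ℝ)) ≤ (M i j : ℝ) * (Real.pi / (M i j : ℝ)) := by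
              apply mul_le_mul_of_nonneg_right hxm
              positivity
          _ = Real.pi := by
              field_simp
    have haux := gr.rankTwoFinAux hm k
    rw [← hθ] at haux
    set P := (if Even k then Real.sin (((k:ℝ)+1) * θ) else Real.sin ((k:ℝ) * θ)) with hP
    set Q := (if Even k then Real.sin ((k:ℝ) * θ) else Real.sin (((k:ℝ)+1) * θ)) with hQ
    have hkr : ((k:ℝ)+1) ≤ (M i j : ℝ) := by exact_mod_cast hk
    have hPpos : 0 ≤ P := by
      rw [hP]
      split_ifs
      · exact hbound _ (by positivity) hkr
      · exact hbound _ (Nat.cast_nonneg k) (by linarith)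
    have hQpos : 0 ≤ Q := by
      rw [hQ]
      split_ifs
      · exact hbound _ (Nat.cast_nonneg k) (by linarith)
      · exact hbound _ (by positivity) hkr
    refine ⟨(Real.sin θ)⁻¹ * P, (Real.sin θ)⁻¹ * Q, by positivity, by positivity, ?_⟩
    have := congrArg (fun y => (Real.sin θ)⁻¹ • y) haux
    rw [inv_smul_smul₀ (ne_of_gt hsin)] at this
    rw [this, smul_add, smul_smul, smul_smul]

end GeomRep
namespace GeomRep

variable {cs : CoxeterSystem M W} (gr : GeomRep cs V)

theorem pos_of_ascent_aux : ∀ n : ℕ, ∀ w : W, cs.length w ≤ n → ∀ i : I,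
    cs.length (w * cs.simple i) = cs.length w + 1 →
    gr.ρ w (gr.α i) ∈ posSpan (Set.range gr.α) := by
  intro n
  induction n with
  | zero =>
    intro w hw i _
    have hw1 : w = 1 := cs.length_eq_zero_iff.mp (Nat.le_zero.mp hw)
    subst hw1
    rw [rho_one_apply]
    exact mem_posSpan_self ⟨i, rfl⟩
  | succ n IH =>
    intro w hw i h
    by_cases hle : cs.length w ≤ n
    · exact IH w hle i h
    have hlen : cs.length w = n + 1 := by omega
    have hne : w ≠ 1 := by
      intro h1
      rw [h1, cs.length_one] at hlen
      omega
    obtain ⟨j, hj⟩ := cs.exists_rightDescent_of_ne_one hne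
    have hjl : cs.length (w * cs.simple j) + 1 = cs.length w := cs.isRightDescent_iff.mp hj
    have hij : i ≠ j := by
      rintro rfl
      omega
    set Q : ℕ → Prop := fun t =>
      cs.length (w * (cs.wordProd (CoxeterSystem.alternatingWord i j t))⁻¹) + t
        = cs.length w with hQdef
    have halt1 : CoxeterSystem.alternatingWord i j 1 = [j] := rfl
    have halt1' : CoxeterSystem.alternatingWord j i 1 = [i] := rfl
    have hQ1 : Q 1 := by
      simp only [hQdef, halt1, cs.wordProd_singleton, cs.inv_simple]
      omega
    have hDC : ∀ t k', t ≤ k' → Q k' → Q t := by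
      intro t k' htk hk'
      obtain ⟨l, hl, he⟩ := alt_split i j t k' htk
      have hlow : cs.length w
          ≤ cs.length (w * (cs.wordProd (CoxeterSystem.alternatingWord i j t))⁻¹) + t := by
        have h2 : w = (w * (cs.wordProd (CoxeterSystem.alternatingWord i j t))⁻¹)
            * cs.wordProd (CoxeterSystem.alternatingWord i j t) := by group
        calc cs.length w
            = cs.length ((w * (cs.wordProd (CoxeterSystem.alternatingWord i j t))⁻¹)
              * cs.wordProd (CoxeterSystem.alternatingWord i j t)) := by rw [← h2]
          _ ≤ cs.length (w * (cs.wordProd (CoxeterSystem.alternatingWord i j t))⁻¹)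
              + cs.length (cs.wordProd (CoxeterSystem.alternatingWord i j t)) :=
              cs.length_mul_le _ _
          _ ≤ _ := by
              have := cs.length_wordProd_le (CoxeterSystem.alternatingWord i j t)
              rw [CoxeterSystem.length_alternatingWord] at this
              omega
      have hsplitprod : cs.wordProd (CoxeterSystem.alternatingWord i j k')
          = cs.wordProd l * cs.wordProd (CoxeterSystem.alternatingWord i j t) := by
        rw [he, cs.wordProd_append]
      have hup : w * (cs.wordProd (CoxeterSystem.alternatingWord i j t))⁻¹
          = (w * (cs.wordProd (CoxeterSystem.alternatingWord i j k'))⁻¹) * cs.wordProd l := by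
        rw [hsplitprod]
        group
      have hupl : cs.length (w * (cs.wordProd (CoxeterSystem.alternatingWord i j t))⁻¹)
          ≤ cs.length (w * (cs.wordProd (CoxeterSystem.alternatingWord i j k'))⁻¹)
            + (k' - t) := by
        rw [hup]
        calc cs.length _ ≤ cs.length (w * (cs.wordProd (CoxeterSystem.alternatingWord i j k'))⁻¹)
              + cs.length (cs.wordProd l) := cs.length_mul_le _ _
          _ ≤ _ := by
              have := cs.length_wordProd_le l
              omega
      simp only [hQdef] at hk' ⊢
      omega
    set k : ℕ := Nat.findGreatest Q (cs.length w) with hkdef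
    have hQk : Q k := Nat.findGreatest_spec (m := 1) (by omega) hQ1
    have hk1 : 1 ≤ k := Nat.le_findGreatest (by omega) hQ1
    have hkle : k ≤ cs.length w := Nat.findGreatest_le _
    set v : W := w * (cs.wordProd (CoxeterSystem.alternatingWord i j k))⁻¹ with hvdef
    have hv : cs.length v + k = cs.length w := hQk
    have hk' : k - 1 + 1 = k := by omega
    -- ascent for the letter d (leftmost of π_k)
    have hsplit : CoxeterSystem.alternatingWord i j k
        = (if Even (k-1) then j else i) :: CoxeterSystem.alternatingWord i j (k-1) := by
      have := CoxeterSystem.alternatingWord_succ' i j (k-1)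
      rwa [hk'] at this
    have hvd : v * cs.simple (if Even (k-1) then j else i)
        = w * (cs.wordProd (CoxeterSystem.alternatingWord i j (k-1)))⁻¹ := by
      rw [hvdef, hsplit, cs.wordProd_cons, mul_inv_rev, cs.inv_simple]
      group
      rw [mul_assoc, cs.simple_mul_simple_self, mul_one]
    have hQk1 : Q (k-1) := hDC _ _ (by omega) hQk
    have hdasc : cs.length (v * cs.simple (if Even (k-1) then j else i))
        = cs.length v + 1 := by
      rw [hvd]
      simp only [hQdef] at hQk1
      omega
    -- ascent for the letter c (extending the alternation)
    have hsplit2 : CoxeterSystem.alternatingWord i j (k+1)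
        = (if Even k then j else i) :: CoxeterSystem.alternatingWord i j k :=
      CoxeterSystem.alternatingWord_succ' i j k
    have hvc : v * cs.simple (if Even k then j else i)
        = w * (cs.wordProd (CoxeterSystem.alternatingWord i j (k+1)))⁻¹ := by
      rw [hvdef, hsplit2, cs.wordProd_cons, mul_inv_rev, cs.inv_simple]
      group
    have hcasc : cs.length (v * cs.simple (if Even k then j else i))
        = cs.length v + 1 := by
      rcases cs.length_mul_simple v (if Even k then j else i) with hup | hdown
      · exact hup
      · exfalso
        by_cases hkk : k + 1 ≤ cs.length w
        · have hnq := Nat.findGreatest_is_greatest (P := Q) (n := cs.length w)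
            (by omega) hkk
          apply hnq
          simp only [hQdef]
          rw [← hvc]
          omega
        · omega
    -- the bound k + 1 ≤ M i j in the finite case
    have hmcase : M i j = 0 ∨ k + 1 ≤ M i j := by
      by_cases hm0 : M i j = 0
      · exact Or.inl hm0
      right
      by_contra hgt
      push_neg at hgt
      have hQm : Q (M i j) := hDC _ _ (by omega) hQk
      have hMsymm : M j i = M i j := M.symmetric j i
      have hbraid : cs.wordProd (CoxeterSystem.alternatingWord i j (M i j))
          = cs.wordProd (CoxeterSystem.alternatingWord j i (M j i)) :=
        cs.wordProd_braidWord_eq i j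
      have hm1 : 1 ≤ M j i := by omega
      obtain ⟨l, hl, he⟩ := alt_split j i 1 (M j i) hm1
      have hprod : cs.wordProd (CoxeterSystem.alternatingWord i j (M i j))
          = cs.wordProd l * cs.simple i := by
        rw [hbraid, he, cs.wordProd_append, halt1', cs.wordProd_singleton]
      have hwsi : (w * (cs.wordProd (CoxeterSystem.alternatingWord i j (M i j)))⁻¹)
          * cs.wordProd l = w * cs.simple i := by
        rw [hprod, mul_inv_rev, cs.inv_simple]
        group
      have hlen1 : cs.length (w * cs.simple i)
          ≤ cs.length (w * (cs.wordProd (CoxeterSystem.alternatingWord i j (M i j)))⁻¹)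
            + cs.length (cs.wordProd l) := by
        rw [← hwsi]
        exact cs.length_mul_le _ _
      have hlen2 := cs.length_wordProd_le l
      simp only [hQdef] at hQm
      omega
    obtain ⟨a, b, ha, hb, hrho⟩ := gr.rankTwo hij hmcase
    have hw2 : w = v * cs.wordProd (CoxeterSystem.alternatingWord i j k) := by
      rw [hvdef]
      group
    have hvi : cs.length (v * cs.simple i) = cs.length v + 1 ∧
        cs.length (v * cs.simple j) = cs.length v + 1 := by
      by_cases hek : Even k
      · have hok : ¬ Even (k - 1) := by
          rw [← hk'] at hek
          exact (Nat.even_add_one.mp hek)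
        rw [if_neg hok] at hdasc
        rw [if_pos hek] at hcasc
        exact ⟨hdasc, hcasc⟩
      · have hok : Even (k - 1) := by
          by_contra hok
          rw [← hk'] at hek
          exact hek (Nat.even_add_one.mpr hok)
        rw [if_pos hok] at hdasc
        rw [if_neg hek] at hcasc
        exact ⟨hcasc, hdasc⟩
    have hvpos_i := IH v (by omega) i hvi.1
    have hvpos_j := IH v (by omega) j hvi.2
    rw [hw2, rho_mul_apply, hrho, map_add, map_smul, map_smul]
    exact posSpan_add (posSpan_smul ha hvpos_i) (posSpan_smul hb hvpos_j)

theorem pos_of_ascent {w : W} {i : I} (h : cs.length (w * cs.simple i) = cs.length w + 1) :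
    gr.ρ w (gr.α i) ∈ posSpan (Set.range gr.α) :=
  gr.pos_of_ascent_aux (cs.length w) w le_rfl i h

theorem posRoot_of_ascent {w : W} {i : I}
    (h : cs.length (w * cs.simple i) = cs.length w + 1) :
    gr.ρ w (gr.α i) ∈ gr.posRoots :=
  ⟨gr.roots_invariant (gr.simple_mem_roots i) w, gr.pos_of_ascent h⟩

theorem root_pos_or_neg {x : V} (hx : x ∈ gr.roots) :
    x ∈ gr.posRoots ∨ -x ∈ gr.posRoots := by
  obtain ⟨w, l, rfl⟩ := hx
  rcases cs.length_mul_simple w l with hup | hdown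
  · exact Or.inl (gr.posRoot_of_ascent hup)
  · right
    have hasc : cs.length ((w * cs.simple l) * cs.simple l)
        = cs.length (w * cs.simple l) + 1 := by
      rw [cs.simple_mul_simple_cancel_right]
      omega
    have hpos := gr.posRoot_of_ascent hasc
    have : gr.ρ (w * cs.simple l) (gr.α l) = - gr.ρ w (gr.α l) := by
      rw [rho_mul_apply, rho_simple_self, map_neg]
    rwa [this] at hpos

theorem reflect_pos {x : V} {i : I} (hx : x ∈ gr.posRoots) (hxi : x ≠ gr.α i) :
    gr.ρ (cs.simple i) x ∈ gr.posRoots := by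
  have hroot : gr.ρ (cs.simple i) x ∈ gr.roots := gr.roots_invariant hx.1 _
  rcases gr.root_pos_or_neg hroot with hp | hn
  · exact hp
  exfalso
  have hsum : x + - gr.ρ (cs.simple i) x = (2 * gr.B (gr.α i) x) • gr.α i := by
    rw [gr.ρ_simple]
    abel
  obtain ⟨a, ha, hxa⟩ := gr.sum_eq_smul_simple hx.2 hn.2 hsum
  exact hxi (gr.posRoot_eq_simple hx.1 ha hxa)

end GeomRep
namespace GeomRep

variable {cs : CoxeterSystem M W} (gr : GeomRep cs V)

theorem dominates_reflect {u : W} {a b : V} (hua : gr.ρ u a ∈ gr.posRoots)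
    (hb : b ∈ gr.posRoots) (h : gr.dominates a b) :
    gr.dominates (gr.ρ u a) (gr.ρ u b) := by
  intro w hw
  have hinv : (u⁻¹ * w)⁻¹ = w⁻¹ * u := by group
  have hb' : b ∈ gr.invSet (u⁻¹ * w) := by
    refine ⟨hb, ?_⟩
    rw [hinv, rho_mul_apply]
    exact hw.2
  have ha' := h _ hb'
  refine ⟨hua, ?_⟩
  have := ha'.2
  rwa [hinv, rho_mul_apply] at this

theorem dpInf_simple (i : I) : gr.dpInf (gr.α i) = 0 := by
  have hempty : gr.domSet (gr.α i) = ∅ := by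
    rw [Set.eq_empty_iff_forall_notMem]
    rintro a ⟨hapos, hdom, hane⟩
    have hαinv : gr.α i ∈ gr.invSet (cs.simple i) := by
      refine ⟨gr.simple_mem_posRoots i, ?_⟩
      rw [cs.inv_simple, rho_simple_self, Set.mem_neg, neg_neg]
      exact gr.simple_mem_posRoots i
    have ha := hdom _ hαinv
    have h2 := ha.2
    rw [cs.inv_simple, Set.mem_neg] at h2
    exact gr.not_pos_and_neg (gr.reflect_pos hapos hane) h2
  rw [dpInf, hempty, Set.ncard_empty]

theorem dpInf_le_of_reflect {i : I} {b : V} (hb : b ∈ gr.posRoots) (hbi : b ≠ gr.α i)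
    (hai : gr.α i ∉ gr.domSet b) :
    gr.dpInf b ≤ gr.dpInf (gr.ρ (cs.simple i) b) := by
  set g := gr.ρ (cs.simple i) b with hgdef
  have hg : g ∈ gr.posRoots := gr.reflect_pos hb hbi
  have hgb : gr.ρ (cs.simple i) g = b := gr.rho_simple_sq i b
  have himg : (fun x => gr.ρ (cs.simple i) x) '' gr.domSet b = gr.domSet g \ {gr.α i} := by
    ext y
    constructor
    · rintro ⟨x, ⟨hxpos, hxdom, hxne⟩, rfl⟩
      have hxnei : x ≠ gr.α i := fun he => hai (he ▸ ⟨hxpos, hxdom, hxne⟩)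
      have hxpos' := gr.reflect_pos hxpos hxnei
      refine ⟨⟨hxpos', ?_, ?_⟩, ?_⟩
      · exact gr.dominates_reflect hxpos' hb hxdom
      · intro he
        exact hxne (gr.rho_injective _ he)
      · intro he
        rw [Set.mem_singleton_iff] at he
        have hx2 : x = gr.ρ (cs.simple i) (gr.α i) := by
          rw [← he, gr.rho_simple_sq]
        rw [gr.rho_simple_self] at hx2
        apply gr.not_pos_and_neg (gr.simple_mem_posRoots i)
        rw [← hx2]
        exact hxpos
    · rintro ⟨⟨hypos, hydom, hyne⟩, hyni⟩
      rw [Set.mem_singleton_iff] at hyni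
      have hypos' := gr.reflect_pos hypos hyni
      refine ⟨gr.ρ (cs.simple i) y, ⟨hypos', ?_, ?_⟩, gr.rho_simple_sq i y⟩
      · have := gr.dominates_reflect (u := cs.simple i) hypos' hg hydom
        rwa [hgb] at this
      · intro he
        apply hyne
        rw [← gr.rho_simple_sq i y, he, hgdef]
    -- end himg
  have hcard : (gr.domSet b).ncard = (gr.domSet g \ {gr.α i}).ncard := by
    rw [← himg, Set.ncard_image_of_injOn (fun x _ y _ hxy => gr.rho_injective _ hxy)]
  show (gr.domSet b).ncard ≤ (gr.domSet g).ncard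
  rw [hcard]
  by_cases hfin : (gr.domSet g).Finite
  · exact Set.ncard_le_ncard Set.diff_subset hfin
  · have h1 : (gr.domSet g \ {gr.α i}).Infinite :=
      Set.Infinite.diff hfin (Set.finite_singleton _)
    rw [Set.Infinite.ncard h1]
    exact Nat.zero_le _

end GeomRep
/-- If `ℓ(sw) > ℓ(w)` then `Σ_n(sw) = {α_s} ⊔ (Σ_n ∩ s(Σ_n(w)))`. -/
theorem smallInv_of_mul_simple (gr : GeomRep cs V) (i : I) (w : W) (n : ℕ)
    (h : cs.length (cs.simple i * w) = cs.length w + 1) :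
    gr.invSet (cs.simple i * w) ∩ gr.smallRoots n =
        insert (gr.α i)
          (gr.smallRoots n ∩ (⇑(gr.ρ (cs.simple i)) '' (gr.invSet w ∩ gr.smallRoots n))) ∧
      gr.α i ∉
        gr.smallRoots n ∩ (⇑(gr.ρ (cs.simple i)) '' (gr.invSet w ∩ gr.smallRoots n)) := by
  have hswinv : (cs.simple i * w)⁻¹ = w⁻¹ * cs.simple i := by
    rw [mul_inv_rev, cs.inv_simple]
  -- key positivity fact
  have hwasc : cs.length (w⁻¹ * cs.simple i) = cs.length w⁻¹ + 1 := by
    rw [← hswinv, cs.length_inv, cs.length_inv]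
    exact h
  have hKey : gr.ρ w⁻¹ (gr.α i) ∈ gr.posRoots := gr.posRoot_of_ascent hwasc
  have hαnotinv : gr.α i ∉ gr.invSet w := by
    rintro ⟨_, h2⟩
    rw [Set.mem_neg] at h2
    exact gr.not_pos_and_neg hKey h2
  have hαin : gr.α i ∈ gr.invSet (cs.simple i * w) := by
    refine ⟨gr.simple_mem_posRoots i, ?_⟩
    rw [hswinv, GeomRep.rho_mul_apply, gr.rho_simple_self, map_neg, Set.mem_neg, neg_neg]
    exact hKey
  have hαsmall : gr.α i ∈ gr.smallRoots n := by
    refine ⟨gr.simple_mem_posRoots i, ?_⟩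
    rw [gr.dpInf_simple]
    exact Nat.zero_le n
  have hdomfree : ∀ β ∈ gr.invSet w, gr.α i ∉ gr.domSet β := by
    rintro β hβ ⟨_, hdom, _⟩
    exact hαnotinv (hdom _ hβ)
  constructor
  · ext x
    constructor
    · rintro ⟨hxinv, hxsm⟩
      by_cases hxi : x = gr.α i
      · exact hxi ▸ Set.mem_insert _ _
      refine Set.mem_insert_iff.mpr (Or.inr ⟨hxsm, ?_⟩)
      set β := gr.ρ (cs.simple i) x with hβdef
      have hβpos : β ∈ gr.posRoots := gr.reflect_pos hxinv.1 hxi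
      have hβinv : β ∈ gr.invSet w := by
        refine ⟨hβpos, ?_⟩
        rw [hβdef, ← GeomRep.rho_mul_apply, show w⁻¹ * cs.simple i = (cs.simple i * w)⁻¹ by
          rw [mul_inv_rev, cs.inv_simple]]
        exact hxinv.2
      have hβnei : β ≠ gr.α i := by
        intro he
        have hx2 : x = gr.ρ (cs.simple i) (gr.α i) := by
          rw [← he, hβdef, gr.rho_simple_sq]
        rw [gr.rho_simple_self] at hx2
        apply gr.not_pos_and_neg (gr.simple_mem_posRoots i)
        rw [← hx2]
        exact hxinv.1
      have hβx : gr.ρ (cs.simple i) β = x := gr.rho_simple_sq i x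
      have hβsmall : gr.dpInf β ≤ n := by
        have h1 := gr.dpInf_le_of_reflect hβpos hβnei (hdomfree β hβinv)
        rw [hβx] at h1
        exact le_trans h1 hxsm.2
      exact ⟨β, ⟨hβinv, ⟨hβpos, hβsmall⟩⟩, hβx⟩
    · intro hx
      rcases Set.mem_insert_iff.mp hx with rfl | ⟨hxsm, β, ⟨hβinv, _⟩, rfl⟩
      · exact ⟨hαin, hαsmall⟩
      · refine ⟨⟨hxsm.1, ?_⟩, hxsm⟩
        rw [← GeomRep.rho_mul_apply, show (cs.simple i * w)⁻¹ * cs.simple i = w⁻¹ by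
          rw [mul_inv_rev, cs.inv_simple, mul_assoc, cs.simple_mul_simple_self, mul_one]]
        exact hβinv.2
  · rintro ⟨_, β, ⟨hβinv, _⟩, hβeq⟩
    have hβ2 : β = gr.ρ (cs.simple i) (gr.α i) := by
      rw [← hβeq, gr.rho_simple_sq]
    rw [gr.rho_simple_self] at hβ2
    apply gr.not_pos_and_neg (gr.simple_mem_posRoots i)
    rw [← hβ2]
    exact hβinv.1

end CoxGar
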